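/- Let L = B₊·W₊·B₊ᵀ − B₋·D·B₋ᵀ be the weighted Laplacian of a signed graph with at least one positive and at least one negative edge, where W₊ and D are diagonal with strictly positive entries. Suppose the full graph is connected, i.e. the null space of [B₊ B₋]ᵀ equals the span of the all-ones vector, but the positive subgraph is not connected, i.e. the null space of B₊ᵀ has dimension at least 2. Then L is not positive semidefinite: there exists a vector x with xᵀ·L·x < 0. This holds for every choice of the strictly positive diagonal entries of D. -/

import Mathlib

open Matrix

/-- `B` is an oriented incidence matrix: every column has exactly one `1`,
exactly one `-1`, and zeros elsewhere. -/
def IsIncidenceMatrix {V E : Type*} (B : Matrix V E ℝ) : Prop :=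
  ∀ e : E, ∃ i j : V, i ≠ j ∧ B i e = 1 ∧ B j e = -1 ∧
    ∀ k : V, k ≠ i → k ≠ j → B k e = 0

/-- if the full graph is connected but the positive subgraph is not,
then the signed Laplacian is indefinite for every choice of (strictly positive)
magnitudes of the negative edge weights. -/
theorem negative_cut_implies_indefinite
    {V Ep Em : Type*} [Fintype V] [Fintype Ep] [Fintype Em]
    [DecidableEq V] [DecidableEq Ep] [DecidableEq Em] [Nonempty V]
    [Nonempty Ep] [Nonempty Em]
    (Bp : Matrix V Ep ℝ) (Bm : Matrix V Em ℝ)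
    (hBp : IsIncidenceMatrix Bp) (hBm : IsIncidenceMatrix Bm)
    -- the full graph is connected
    (hConn : LinearMap.ker (Matrix.fromCols Bp Bm)ᵀ.mulVecLin =
      Submodule.span ℝ {(fun _ : V => (1 : ℝ))})
    -- the positive subgraph is not connected
    (hNotConn : 2 ≤ Module.finrank ℝ (LinearMap.ker Bpᵀ.mulVecLin))
    (wp : Ep → ℝ) (hwp : ∀ e, 0 < wp e) :
    ∀ d : Em → ℝ, (∀ e, 0 < d e) →
      ∃ x : V → ℝ,
        x ⬝ᵥ ((Bp * Matrix.diagonal wp * Bpᵀ - Bm * Matrix.diagonal d * Bmᵀ).mulVec x) < 0 := by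
  intro d hd
  have hone : (fun _ : V => (1:ℝ)) ≠ 0 := by
    intro h; have := congrFun h (Classical.arbitrary V); simp at this
  have hspan1 : Module.finrank ℝ (Submodule.span ℝ {(fun _ : V => (1 : ℝ))}) = 1 :=
    finrank_span_singleton hone
  have hnle : ¬ (LinearMap.ker Bpᵀ.mulVecLin ≤ Submodule.span ℝ {(fun _ : V => (1 : ℝ))}) := by
    intro hle
    have := Submodule.finrank_mono hle
    omega
  obtain ⟨x, hxker, hxnsp⟩ := SetLike.not_le_iff_exists.mp hnle
  have hBpx : Bpᵀ.mulVec x = 0 := hxker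
  have hBmx : Bmᵀ.mulVec x ≠ 0 := by
    intro h
    apply hxnsp
    rw [← hConn]
    show (fromCols Bp Bm)ᵀ.mulVec x = 0
    rw [transpose_fromCols, fromRows_mulVec, hBpx, h]
    ext (i|i) <;> simp
  refine ⟨x, ?_⟩
  set z := Bmᵀ.mulVec x with hz
  have h1 : (Bp * Matrix.diagonal wp * Bpᵀ).mulVec x = 0 := by
    rw [Matrix.mul_assoc, ← Matrix.mulVec_mulVec, ← Matrix.mulVec_mulVec, hBpx]
    simp
  have h2 : x ⬝ᵥ (Bm * Matrix.diagonal d * Bmᵀ).mulVec x =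
      ∑ e, d e * (z e)^2 := by
    rw [Matrix.mul_assoc, ← Matrix.mulVec_mulVec, ← Matrix.mulVec_mulVec,
      Matrix.dotProduct_mulVec, ← Matrix.mulVec_transpose]
    simp [dotProduct, mulVec_diagonal, ← hz]
    exact Finset.sum_congr rfl fun i _ => by ring
  rw [sub_mulVec, dotProduct_sub, h1, h2]
  simp only [dotProduct_zero, zero_sub, neg_neg, neg_lt, neg_zero]
  obtain ⟨e, he⟩ := Function.ne_iff.mp hBmx
  apply Finset.sum_pos' (fun i _ => mul_nonneg (hd i).le (sq_nonneg _))
  exact ⟨e, Finset.mem_univ e, mul_pos (hd e) (by have : z e ≠ 0 := he; positivity)⟩
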